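/- Let n ≥ 1 and let S be a left-handed skew Boolean algebra generated by n distinct elements x_1,…,x_n. Then |S| ≤ ∏_{m=1}^{n} (m+1)^{C(n,m)}, and equality holds if and only if S is freely generated by {x_1,…,x_n}. -/

import Mathlib

universe u

/-- A skew Boolean algebra. -/
class SBA (S : Type u) where
  wedge : S → S → S
  vee : S → S → S
  diff : S → S → S
  zero : S
  wedge_assoc : ∀ x y z : S, wedge (wedge x y) z = wedge x (wedge y z)
  vee_assoc : ∀ x y z : S, vee (vee x y) z = vee x (vee y z)
  absorb1 : ∀ x y : S, wedge x (vee x y) = x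
  absorb2 : ∀ x y : S, wedge (vee y x) x = x
  absorb3 : ∀ x y : S, vee x (wedge x y) = x
  absorb4 : ∀ x y : S, vee (wedge y x) x = x
  sdistrib1 : ∀ x y z : S, wedge x (vee y z) = vee (wedge x y) (wedge x z)
  sdistrib2 : ∀ x y z : S, wedge (vee x y) z = vee (wedge x z) (wedge y z)
  zero_wedge : ∀ x : S, wedge zero x = zero
  wedge_zero : ∀ x : S, wedge x zero = zero
  zero_vee : ∀ x : S, vee zero x = x
  vee_zero : ∀ x : S, vee x zero = x
  diff_ax1 : ∀ x y : S, vee (wedge (wedge x y) x) (diff x y) = x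
  diff_ax2 : ∀ x y : S, wedge (wedge (wedge x y) x) (diff x y) = zero
  diff_ax3 : ∀ x y : S, wedge (diff x y) (wedge (wedge x y) x) = zero

namespace SBA

scoped infixl:70 " ⋏ " => SBA.wedge
scoped infixl:65 " ⋎ " => SBA.vee
scoped infixl:70 " ∖ " => SBA.diff

variable {S : Type u} [SBA S]

/-- Green's relation `D`: `x D y` iff `x⋏y⋏x = x` and `y⋏x⋏y = y`. -/
def Drel (x y : S) : Prop := x ⋏ y ⋏ x = x ∧ y ⋏ x ⋏ y = y

/-- The natural partial order: `x ≤ y` iff `x⋏y = x = y⋏x`. -/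
def nle (x y : S) : Prop := x ⋏ y = x ∧ y ⋏ x = x

/-- An atom: a nonzero element with nothing strictly between it and `0`. -/
def IsAtom (a : S) : Prop := a ≠ zero ∧ ∀ x : S, nle x a → x = zero ∨ x = a

/-- `X` generates `S`: the only subset of `S` containing `X` and `0` and closed
under the three operations is `S` itself. -/
def Generates (X : Set S) : Prop :=
  ∀ T : Set S, X ⊆ T → zero ∈ T →
    (∀ a b : S, a ∈ T → b ∈ T → a ⋏ b ∈ T ∧ a ⋎ b ∈ T ∧ a ∖ b ∈ T) →
    T = Set.univ

/-- A homomorphism of skew Boolean algebras. -/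
def IsHom {T : Type u} [SBA T] (f : S → T) : Prop :=
  (∀ a b : S, f (a ⋏ b) = f a ⋏ f b) ∧ (∀ a b : S, f (a ⋎ b) = f a ⋎ f b) ∧
    (∀ a b : S, f (a ∖ b) = f a ∖ f b) ∧ f zero = zero

end SBA

open SBA

/-- A left-handed skew Boolean algebra. -/
class LeftHanded (S : Type u) [SBA S] : Prop where
  lh_wedge : ∀ x y : S, x ⋏ y ⋏ x = x ⋏ y
  lh_vee : ∀ x y : S, x ⋎ y ⋎ x = y ⋎ x

/-- `S` is freely generated by `X` over the variety of all skew Boolean algebras. -/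
def FreelyGenerates (S : Type u) [SBA S] (X : Set S) : Prop :=
  Generates X ∧
    ∀ (T : Type u) [SBA T], ∀ g : X → T,
      ∃ f : S → T, IsHom f ∧ ∀ x : X, f x = g x

/-- `S` is freely generated by `X` over the variety of left-handed skew Boolean algebras. -/
def LFreelyGenerates (S : Type u) [SBA S] [LeftHanded S] (X : Set S) : Prop :=
  Generates X ∧
    ∀ (T : Type u) [SBA T] [LeftHanded T], ∀ g : X → T,
      ∃ f : S → T, IsHom f ∧ ∀ x : X, f x = g x

/- ===================== Auxiliary development ===================== -/

universe v w

namespace SKP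
open SBA
set_option linter.unusedSectionVars false

/-! ### The primitive left-handed SBA structure on `Option α` -/

instance instSBAOption {α : Type v} : SBA (Option α) where
  wedge a b := match b with | none => none | some _ => a
  vee a b := match b with | none => a | some _ => b
  diff a b := match b with | none => a | some _ => none
  zero := none
  wedge_assoc := by intro x y z; cases x <;> cases y <;> cases z <;> rfl
  vee_assoc := by intro x y z; cases x <;> cases y <;> cases z <;> rfl
  absorb1 := by intro x y; cases x <;> cases y <;> rfl
  absorb2 := by intro x y; cases x <;> cases y <;> rfl
  absorb3 := by intro x y; cases x <;> cases y <;> rfl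
  absorb4 := by intro x y; cases x <;> cases y <;> rfl
  sdistrib1 := by intro x y z; cases x <;> cases y <;> cases z <;> rfl
  sdistrib2 := by intro x y z; cases x <;> cases y <;> cases z <;> rfl
  zero_wedge := by intro x; cases x <;> rfl
  wedge_zero := by intro x; cases x <;> rfl
  zero_vee := by intro x; cases x <;> rfl
  vee_zero := by intro x; cases x <;> rfl
  diff_ax1 := by intro x y; cases x <;> cases y <;> rfl
  diff_ax2 := by intro x y; cases x <;> cases y <;> rfl
  diff_ax3 := by intro x y; cases x <;> cases y <;> rfl

instance instLHOption {α : Type v} : LeftHanded (Option α) where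
  lh_wedge := by intro x y; cases x <;> cases y <;> rfl
  lh_vee := by intro x y; cases x <;> cases y <;> rfl

/-! ### Pointwise structure on Pi types -/

instance instSBAPi {ι : Type v} {β : ι → Type w} [∀ i, SBA (β i)] : SBA (∀ i, β i) where
  wedge u v := fun i => u i ⋏ v i
  vee u v := fun i => u i ⋎ v i
  diff u v := fun i => u i ∖ v i
  zero := fun _ => SBA.zero
  wedge_assoc := by intro x y z; funext i; exact SBA.wedge_assoc _ _ _
  vee_assoc := by intro x y z; funext i; exact SBA.vee_assoc _ _ _
  absorb1 := by intro x y; funext i; exact SBA.absorb1 _ _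
  absorb2 := by intro x y; funext i; exact SBA.absorb2 _ _
  absorb3 := by intro x y; funext i; exact SBA.absorb3 _ _
  absorb4 := by intro x y; funext i; exact SBA.absorb4 _ _
  sdistrib1 := by intro x y z; funext i; exact SBA.sdistrib1 _ _ _
  sdistrib2 := by intro x y z; funext i; exact SBA.sdistrib2 _ _ _
  zero_wedge := by intro x; funext i; exact SBA.zero_wedge _
  wedge_zero := by intro x; funext i; exact SBA.wedge_zero _
  zero_vee := by intro x; funext i; exact SBA.zero_vee _
  vee_zero := by intro x; funext i; exact SBA.vee_zero _
  diff_ax1 := by intro x y; funext i; exact SBA.diff_ax1 _ _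
  diff_ax2 := by intro x y; funext i; exact SBA.diff_ax2 _ _
  diff_ax3 := by intro x y; funext i; exact SBA.diff_ax3 _ _

instance instLHPi {ι : Type v} {β : ι → Type w} [∀ i, SBA (β i)] [∀ i, LeftHanded (β i)] :
    LeftHanded (∀ i, β i) where
  lh_wedge := by intro x y; funext i; exact LeftHanded.lh_wedge _ _
  lh_vee := by intro x y; funext i; exact LeftHanded.lh_vee _ _

/-! ### General identities in a left-handed SBA -/

section Ident
variable {T : Type v} [SBA T] [LeftHanded T]

lemma widem (x : T) : x ⋏ x = x := by
  have h2 := SBA.absorb1 x (x ⋏ x)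
  rw [SBA.absorb3 x x] at h2; exact h2

lemma videm (x : T) : x ⋎ x = x := by
  have h2 := SBA.absorb3 x (x ⋎ x)
  rw [SBA.absorb1 x x] at h2; exact h2

lemma lhw (x y : T) : (x ⋏ y) ⋏ x = x ⋏ y := LeftHanded.lh_wedge x y
lemma lhv (x y : T) : (x ⋎ y) ⋎ x = y ⋎ x := LeftHanded.lh_vee x y

lemma wv_absorb (x y : T) : (x ⋏ y) ⋎ x = x := by
  have h := SBA.absorb4 x (x ⋏ y)
  rwa [lhw] at h

lemma worth_symm {a b : T} (h : a ⋏ b = SBA.zero) : b ⋏ a = SBA.zero := by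
  have hth := widem (b ⋏ a)
  rw [← SBA.wedge_assoc (b ⋏ a) b a, SBA.wedge_assoc b a b, h, SBA.wedge_zero,
    SBA.zero_wedge] at hth
  exact hth.symm

lemma kill0 {c a b : T} (h1 : c ⋏ a = c) (h2 : c ⋏ b = c) (h : a ⋏ b = SBA.zero) :
    c = SBA.zero := by
  conv_lhs => rw [← h2, ← h1]
  rw [SBA.wedge_assoc, h, SBA.wedge_zero]

lemma kill_of_le {a b q : T} (h1 : a ⋏ q = SBA.zero) (h2 : b ⋏ q = b) :
    a ⋏ b = SBA.zero :=
  kill0 (lhw a b) (by rw [SBA.wedge_assoc, h2]) h1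

lemma subOrth {a b a' b' : T} (hab : a ⋏ b = SBA.zero) (ha : a' ⋏ a = a')
    (hb : b' ⋏ b = b') : a' ⋏ b' = SBA.zero := by
  have h1 : a' ⋏ b = SBA.zero := by rw [← ha, SBA.wedge_assoc, hab, SBA.wedge_zero]
  exact kill0 (lhw a' b') (by rw [SBA.wedge_assoc, hb]) h1

lemma vcomm {a b : T} (h : b ⋏ a = SBA.zero) : a ⋎ b = b ⋎ a := by
  have h1 : (a ⋎ b) ⋏ a = a := by rw [SBA.sdistrib2, h, widem, SBA.vee_zero]
  have h2 := lhv a b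
  have h3 := SBA.absorb3 (a ⋎ b) a
  rw [h1] at h3
  rw [h3] at h2; exact h2

lemma dA1 (x y : T) : (x ⋏ y) ⋎ (x ∖ y) = x := by
  have h := SBA.diff_ax1 x y; rwa [lhw] at h

lemma dA2 (x y : T) : (x ⋏ y) ⋏ (x ∖ y) = SBA.zero := by
  have h := SBA.diff_ax2 x y; rwa [lhw] at h

lemma dA3 (x y : T) : (x ∖ y) ⋏ (x ⋏ y) = SBA.zero := by
  have h := SBA.diff_ax3 x y; rwa [lhw] at h

lemma diff_le1 (x y : T) : x ⋏ (x ∖ y) = x ∖ y := by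
  calc x ⋏ (x ∖ y) = ((x ⋏ y) ⋎ (x ∖ y)) ⋏ (x ∖ y) := by rw [dA1]
  _ = ((x ⋏ y) ⋏ (x ∖ y)) ⋎ ((x ∖ y) ⋏ (x ∖ y)) := SBA.sdistrib2 _ _ _
  _ = SBA.zero ⋎ (x ∖ y) := by rw [dA2, widem]
  _ = x ∖ y := SBA.zero_vee _

lemma diff_le2 (x y : T) : (x ∖ y) ⋏ x = x ∖ y := by
  calc (x ∖ y) ⋏ x = (x ∖ y) ⋏ ((x ⋏ y) ⋎ (x ∖ y)) := by rw [dA1]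
  _ = ((x ∖ y) ⋏ (x ⋏ y)) ⋎ ((x ∖ y) ⋏ (x ∖ y)) := SBA.sdistrib1 _ _ _
  _ = SBA.zero ⋎ (x ∖ y) := by rw [dA3, widem]
  _ = x ∖ y := SBA.zero_vee _

lemma diff_wedge_self (x y : T) : (x ∖ y) ⋏ y = SBA.zero := by
  calc (x ∖ y) ⋏ y = ((x ∖ y) ⋏ x) ⋏ y := by rw [diff_le2]
  _ = (x ∖ y) ⋏ (x ⋏ y) := SBA.wedge_assoc _ _ _
  _ = SBA.zero := dA3 x y

lemma diff_zero' (x : T) : x ∖ SBA.zero = x := by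
  have h := dA1 x SBA.zero; rwa [SBA.wedge_zero, SBA.zero_vee] at h

lemma zero_diff' (y : T) : SBA.zero ∖ y = (SBA.zero : T) := by
  have h := dA1 (SBA.zero : T) y; rwa [SBA.zero_wedge, SBA.zero_vee] at h

lemma diff_eq_zero {x y : T} (h : x ⋏ y = x) : x ∖ y = SBA.zero := by
  have h2 := dA3 x y
  rw [h] at h2
  have h3 := diff_le2 x y
  rw [h2] at h3; exact h3.symm

lemma sameMeet {e e' : T} (h : e ⋏ e' = e) (q : T) :
    (e ∖ q) ⋏ (e' ∖ q) = e ∖ q := by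
  have s1 : (e ∖ q) ⋏ (e' ⋏ q) = SBA.zero :=
    kill_of_le (diff_wedge_self e q) (by rw [SBA.wedge_assoc, widem])
  have s3 : (e ∖ q) ⋏ e' = e ∖ q := by
    calc (e ∖ q) ⋏ e' = ((e ∖ q) ⋏ e) ⋏ e' := by rw [diff_le2]
    _ = (e ∖ q) ⋏ (e ⋏ e') := SBA.wedge_assoc _ _ _
    _ = (e ∖ q) ⋏ e := by rw [h]
    _ = e ∖ q := diff_le2 e q
  have s2 : (e ∖ q) ⋏ e' = (e ∖ q) ⋏ (e' ∖ q) := by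
    calc (e ∖ q) ⋏ e' = (e ∖ q) ⋏ ((e' ⋏ q) ⋎ (e' ∖ q)) := by rw [dA1]
    _ = ((e ∖ q) ⋏ (e' ⋏ q)) ⋎ ((e ∖ q) ⋏ (e' ∖ q)) := SBA.sdistrib1 _ _ _
    _ = SBA.zero ⋎ ((e ∖ q) ⋏ (e' ∖ q)) := by rw [s1]
    _ = (e ∖ q) ⋏ (e' ∖ q) := SBA.zero_vee _
  rw [← s2, s3]

lemma sameJoin {e e' : T} (h : e ⋏ e' = e) (q : T) :
    (e ∖ q) ⋎ (e' ∖ q) = e' ∖ q := by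
  have h2 := SBA.absorb4 (e' ∖ q) (e ∖ q)
  rwa [sameMeet h q] at h2

lemma sameDiff {e e' : T} (h : e ⋏ e' = e) (q : T) :
    (e ∖ q) ∖ (e' ∖ q) = SBA.zero := diff_eq_zero (sameMeet h q)

end Ident

section Ident2
variable {T : Type v} [SBA T] [LeftHanded T]

/-- `(e ⋏ a) ∖ q = (e ∖ q) ⋏ a`. -/
lemma D1 (e q a : T) : (e ⋏ a) ∖ q = (e ∖ q) ⋏ a := by
  have hz0 : (e ∖ q) ⋏ a = (e ∖ q) ⋏ (e ⋏ a) := by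
    rw [← SBA.wedge_assoc (e ∖ q) e a, diff_le2]
  have hx : e ⋏ a = ((e ⋏ q) ⋏ a) ⋎ ((e ∖ q) ⋏ a) := by
    calc e ⋏ a = ((e ⋏ q) ⋎ (e ∖ q)) ⋏ a := by rw [dA1]
    _ = ((e ⋏ q) ⋏ a) ⋎ ((e ∖ q) ⋏ a) := SBA.sdistrib2 _ _ _
  have hz0x : ((e ∖ q) ⋏ a) ⋏ (e ⋏ a) = (e ∖ q) ⋏ a := by
    rw [hz0, SBA.wedge_assoc, widem]
  have hz0q : ((e ∖ q) ⋏ a) ⋏ q = SBA.zero := by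
    rw [SBA.wedge_assoc]
    exact kill_of_le (diff_wedge_self e q) (by rw [SBA.wedge_assoc, widem])
  have hz0w : ((e ∖ q) ⋏ a) ⋏ ((e ⋏ a) ⋏ q) = SBA.zero :=
    kill_of_le hz0q (by rw [SBA.wedge_assoc, widem])
  have hwq : ((e ⋏ q) ⋏ a) ⋏ q = (e ⋏ q) ⋏ a := by
    rw [SBA.wedge_assoc e q a, SBA.wedge_assoc e (q ⋏ a) q, lhw q a]
  have hwz : ((e ⋏ q) ⋏ a) ⋏ ((e ⋏ a) ∖ q) = SBA.zero :=
    worth_symm (kill_of_le (diff_wedge_self (e ⋏ a) q) hwq)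
  have e1 : (e ⋏ a) ∖ q = ((e ∖ q) ⋏ a) ⋏ ((e ⋏ a) ∖ q) := by
    calc (e ⋏ a) ∖ q = (e ⋏ a) ⋏ ((e ⋏ a) ∖ q) := (diff_le1 _ _).symm
    _ = (((e ⋏ q) ⋏ a) ⋎ ((e ∖ q) ⋏ a)) ⋏ ((e ⋏ a) ∖ q) := by rw [← hx]
    _ = (((e ⋏ q) ⋏ a) ⋏ ((e ⋏ a) ∖ q)) ⋎ (((e ∖ q) ⋏ a) ⋏ ((e ⋏ a) ∖ q)) :=
        SBA.sdistrib2 _ _ _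
    _ = ((e ∖ q) ⋏ a) ⋏ ((e ⋏ a) ∖ q) := by rw [hwz, SBA.zero_vee]
  have e2 : (e ∖ q) ⋏ a = ((e ∖ q) ⋏ a) ⋏ ((e ⋏ a) ∖ q) := by
    calc (e ∖ q) ⋏ a = ((e ∖ q) ⋏ a) ⋏ (e ⋏ a) := hz0x.symm
    _ = ((e ∖ q) ⋏ a) ⋏ (((e ⋏ a) ⋏ q) ⋎ ((e ⋏ a) ∖ q)) := by rw [dA1]
    _ = (((e ∖ q) ⋏ a) ⋏ ((e ⋏ a) ⋏ q)) ⋎ (((e ∖ q) ⋏ a) ⋏ ((e ⋏ a) ∖ q)) :=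
        SBA.sdistrib1 _ _ _
    _ = ((e ∖ q) ⋏ a) ⋏ ((e ⋏ a) ∖ q) := by rw [hz0w, SBA.zero_vee]
  rw [e1, ← e2]

/-- `(e ∖ q) ∖ a = e ∖ (a ⋎ q)`. -/
lemma D2 (e q a : T) : (e ∖ q) ∖ a = e ∖ (a ⋎ q) := by
  have hQq : q ⋏ (a ⋎ q) = q := by rw [SBA.sdistrib1, widem, wv_absorb]
  have hQa : a ⋏ (a ⋎ q) = a := SBA.absorb1 a q
  have hzq : (e ∖ (a ⋎ q)) ⋏ q = SBA.zero :=
    kill_of_le (diff_wedge_self e (a ⋎ q)) hQq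
  have hza : (e ∖ (a ⋎ q)) ⋏ a = SBA.zero :=
    kill_of_le (diff_wedge_self e (a ⋎ q)) hQa
  have hzeq : (e ∖ (a ⋎ q)) ⋏ (e ⋏ q) = SBA.zero :=
    kill_of_le hzq (by rw [SBA.wedge_assoc, widem])
  have step1 : e ∖ (a ⋎ q) = (e ∖ q) ⋏ (e ∖ (a ⋎ q)) := by
    calc e ∖ (a ⋎ q) = e ⋏ (e ∖ (a ⋎ q)) := (diff_le1 _ _).symm
    _ = ((e ⋏ q) ⋎ (e ∖ q)) ⋏ (e ∖ (a ⋎ q)) := by rw [dA1]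
    _ = ((e ⋏ q) ⋏ (e ∖ (a ⋎ q))) ⋎ ((e ∖ q) ⋏ (e ∖ (a ⋎ q))) := SBA.sdistrib2 _ _ _
    _ = (e ∖ q) ⋏ (e ∖ (a ⋎ q)) := by rw [worth_symm hzeq, SBA.zero_vee]
  have hzda : (e ∖ (a ⋎ q)) ⋏ ((e ∖ q) ⋏ a) = SBA.zero :=
    kill_of_le hza (by rw [SBA.wedge_assoc, widem])
  have step2 : e ∖ (a ⋎ q) = ((e ∖ q) ∖ a) ⋏ (e ∖ (a ⋎ q)) := by
    calc e ∖ (a ⋎ q) = (e ∖ q) ⋏ (e ∖ (a ⋎ q)) := step1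
    _ = (((e ∖ q) ⋏ a) ⋎ ((e ∖ q) ∖ a)) ⋏ (e ∖ (a ⋎ q)) := by rw [dA1]
    _ = (((e ∖ q) ⋏ a) ⋏ (e ∖ (a ⋎ q))) ⋎ (((e ∖ q) ∖ a) ⋏ (e ∖ (a ⋎ q))) :=
        SBA.sdistrib2 _ _ _
    _ = ((e ∖ q) ∖ a) ⋏ (e ∖ (a ⋎ q)) := by rw [worth_symm hzda, SBA.zero_vee]
  have hzle : ((e ∖ q) ∖ a) ⋏ e = (e ∖ q) ∖ a := by
    calc ((e ∖ q) ∖ a) ⋏ e = (((e ∖ q) ∖ a) ⋏ (e ∖ q)) ⋏ e := by rw [diff_le2]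
    _ = ((e ∖ q) ∖ a) ⋏ ((e ∖ q) ⋏ e) := SBA.wedge_assoc _ _ _
    _ = ((e ∖ q) ∖ a) ⋏ (e ∖ q) := by rw [diff_le2]
    _ = (e ∖ q) ∖ a := diff_le2 _ _
  have hzlq : ((e ∖ q) ∖ a) ⋏ q = SBA.zero := by
    calc ((e ∖ q) ∖ a) ⋏ q = (((e ∖ q) ∖ a) ⋏ (e ∖ q)) ⋏ q := by rw [diff_le2]
    _ = ((e ∖ q) ∖ a) ⋏ ((e ∖ q) ⋏ q) := SBA.wedge_assoc _ _ _
    _ = ((e ∖ q) ∖ a) ⋏ SBA.zero := by rw [diff_wedge_self]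
    _ = SBA.zero := SBA.wedge_zero _
  have hzlQ : ((e ∖ q) ∖ a) ⋏ (a ⋎ q) = SBA.zero := by
    rw [SBA.sdistrib1, diff_wedge_self, hzlq, SBA.zero_vee]
  have hzlw : ((e ∖ q) ∖ a) ⋏ (e ⋏ (a ⋎ q)) = SBA.zero :=
    kill_of_le hzlQ (by rw [SBA.wedge_assoc, widem])
  have step3 : (e ∖ q) ∖ a = ((e ∖ q) ∖ a) ⋏ (e ∖ (a ⋎ q)) := by
    calc (e ∖ q) ∖ a = ((e ∖ q) ∖ a) ⋏ e := hzle.symm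
    _ = ((e ∖ q) ∖ a) ⋏ ((e ⋏ (a ⋎ q)) ⋎ (e ∖ (a ⋎ q))) := by rw [dA1]
    _ = (((e ∖ q) ∖ a) ⋏ (e ⋏ (a ⋎ q))) ⋎ (((e ∖ q) ∖ a) ⋏ (e ∖ (a ⋎ q))) :=
        SBA.sdistrib1 _ _ _
    _ = ((e ∖ q) ∖ a) ⋏ (e ∖ (a ⋎ q)) := by rw [hzlw, SBA.zero_vee]
  rw [step3, ← step2]

/-- Uniqueness of complements. -/
lemma uniqC {x w z z' : T} (h1 : w ⋎ z = x) (h2 : w ⋎ z' = x) (h3 : w ⋏ z = SBA.zero)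
    (h4 : z' ⋏ w = SBA.zero) (h5 : z' ⋏ x = z') (h6 : x ⋏ z = z) : z = z' := by
  have e1 : z' = z' ⋏ z := by
    calc z' = z' ⋏ x := h5.symm
    _ = z' ⋏ (w ⋎ z) := by rw [h1]
    _ = (z' ⋏ w) ⋎ (z' ⋏ z) := SBA.sdistrib1 _ _ _
    _ = z' ⋏ z := by rw [h4, SBA.zero_vee]
  calc z = x ⋏ z := h6.symm
  _ = (w ⋎ z') ⋏ z := by rw [h2]
  _ = (w ⋏ z) ⋎ (z' ⋏ z) := SBA.sdistrib2 _ _ _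
  _ = z' ⋏ z := by rw [h3, SBA.zero_vee]
  _ = z' := e1.symm

/-! ### Finite joins and meets -/

/-- Iterated join. -/
def jn (l : List T) : T := l.foldr (· ⋎ ·) SBA.zero

/-- Iterated meet with a seed. -/
def mt (x : T) (l : List T) : T := l.foldl (· ⋏ ·) x

@[simp] lemma jn_nil : jn ([] : List T) = SBA.zero := rfl
@[simp] lemma jn_cons (a : T) (l : List T) : jn (a :: l) = a ⋎ jn l := rfl
@[simp] lemma mt_nil (x : T) : mt x [] = x := rfl
@[simp] lemma mt_cons (x a : T) (l : List T) : mt x (a :: l) = mt (x ⋏ a) l := rfl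

lemma jn_append (l₁ l₂ : List T) : jn (l₁ ++ l₂) = jn l₁ ⋎ jn l₂ := by
  induction l₁ with
  | nil => simp [SBA.zero_vee]
  | cons a l ih => simp [ih, SBA.vee_assoc]

lemma wedge_jn (x : T) (l : List T) : x ⋏ jn l = jn (l.map (x ⋏ ·)) := by
  induction l with
  | nil => simpa using SBA.wedge_zero x
  | cons a l ih => simp [SBA.sdistrib1, ih]

lemma jn_wedge (l : List T) (x : T) : jn l ⋏ x = jn (l.map (· ⋏ x)) := by
  induction l with
  | nil => simpa using SBA.zero_wedge x
  | cons a l ih => simp [SBA.sdistrib2, ih]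

lemma jn_eq_zero {l : List T} (h : ∀ a ∈ l, a = SBA.zero) : jn l = SBA.zero := by
  induction l with
  | nil => rfl
  | cons a l ih =>
      rw [jn_cons, h a (by simp), ih (fun b hb => h b (by simp [hb])), SBA.zero_vee]

lemma mem_wedge_jn {a : T} {l : List T} (h : a ∈ l) : a ⋏ jn l = a := by
  induction l with
  | nil => simp at h
  | cons b l ih =>
      rcases List.mem_cons.mp h with h' | h'
      · subst h'; rw [jn_cons]; exact SBA.absorb1 _ _
      · rw [jn_cons, SBA.sdistrib1, ih h', wv_absorb]

lemma absorb_jn {e c : T} {l : List T} (hc : e ⋏ c = e) (hm : c ∈ l) :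
    e ⋏ jn l = e := by
  induction l with
  | nil => simp at hm
  | cons b l ih =>
      rcases List.mem_cons.mp hm with h' | h'
      · subst h'; rw [jn_cons, SBA.sdistrib1, hc, SBA.absorb3]
      · rw [jn_cons, SBA.sdistrib1, ih h', wv_absorb]

lemma mt_concat (x a : T) (l : List T) : mt x (l ++ [a]) = mt x l ⋏ a := by
  simp [mt, List.foldl_append]

lemma wedge_mt (c u : T) (l : List T) : c ⋏ mt u l = mt (c ⋏ u) l := by
  induction l generalizing u with
  | nil => rfl
  | cons a l ih => rw [mt_cons, mt_cons, ih, SBA.wedge_assoc]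

lemma mt_absorb {u c : T} (h : u ⋏ c = u) (l : List T) : mt u l ⋏ c = mt u l := by
  induction l generalizing u with
  | nil => exact h
  | cons a l ih =>
      rw [mt_cons]
      refine ih ?_
      calc (u ⋏ a) ⋏ c = ((u ⋏ c) ⋏ a) ⋏ c := by rw [h]
      _ = (u ⋏ (c ⋏ a)) ⋏ c := by rw [SBA.wedge_assoc u c a]
      _ = u ⋏ ((c ⋏ a) ⋏ c) := SBA.wedge_assoc _ _ _
      _ = u ⋏ (c ⋏ a) := by rw [lhw]
      _ = (u ⋏ c) ⋏ a := (SBA.wedge_assoc _ _ _).symm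
      _ = u ⋏ a := by rw [h]

lemma absorb_mt {u c : T} (h : c ⋏ u = u) (l : List T) : c ⋏ mt u l = mt u l := by
  rw [wedge_mt, h]

lemma mt_mem_absorb {a : T} {l : List T} (h : a ∈ l) (u : T) :
    mt u l ⋏ a = mt u l := by
  induction l generalizing u with
  | nil => simp at h
  | cons b l ih =>
      rcases List.mem_cons.mp h with h' | h'
      · subst h'
        rw [mt_cons]
        exact mt_absorb (by rw [SBA.wedge_assoc, widem]) l
      · rw [mt_cons]; exact ih h' _
lemma mt_all_absorbed {e : T} {l : List T} (h : ∀ a ∈ l, e ⋏ a = e) : mt e l = e := by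
  induction l with
  | nil => rfl
  | cons a l ih => rw [mt_cons, h a (by simp)]; exact ih (fun b hb => h b (by simp [hb]))

lemma mt_wedge_mt {x y : T} {l : List T} (hy : y ∈ l) :
    mt x l ⋏ mt y l = mt x l := by
  rw [wedge_mt, mt_mem_absorb hy]
  exact mt_all_absorbed (fun a ha => mt_mem_absorb ha x)

/-! ### Pairwise-orthogonal join manipulation -/

lemma jn_map_meet {κ : Type w} (L : List κ) (t s : κ → T)
    (hp : L.Pairwise fun A B => (t A ⋏ s B = SBA.zero) ∧ (t B ⋏ s A = SBA.zero)) :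
    jn (L.map t) ⋏ jn (L.map s) = jn (L.map fun A => t A ⋏ s A) := by
  induction L with
  | nil => simpa using SBA.wedge_zero _
  | cons A L ih =>
      rcases List.pairwise_cons.mp hp with ⟨hhead, htail⟩
      have h1 : t A ⋏ jn (L.map s) = SBA.zero := by
        rw [wedge_jn, List.map_map]
        exact jn_eq_zero (by
          intro a ha
          rcases List.mem_map.mp ha with ⟨B, hB, rfl⟩
          exact (hhead B hB).1)
      have h2 : jn (L.map t) ⋏ s A = SBA.zero := by
        rw [jn_wedge, List.map_map]
        exact jn_eq_zero (by
          intro a ha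
          rcases List.mem_map.mp ha with ⟨B, hB, rfl⟩
          exact (hhead B hB).2)
      rw [List.map_cons, List.map_cons, List.map_cons, jn_cons, jn_cons, jn_cons,
        SBA.sdistrib2, SBA.sdistrib1, SBA.sdistrib1, h1, h2, SBA.vee_zero,
        SBA.zero_vee, ih htail]

lemma jn_map_join {κ : Type w} (L : List κ) (t s : κ → T)
    (hp : L.Pairwise fun A B => s A ⋏ t B = SBA.zero) :
    jn (L.map t) ⋎ jn (L.map s) = jn (L.map fun A => t A ⋎ s A) := by
  induction L with
  | nil => simpa using SBA.vee_zero _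
  | cons A L ih =>
      rcases List.pairwise_cons.mp hp with ⟨hhead, htail⟩
      have h1 : s A ⋏ jn (L.map t) = SBA.zero := by
        rw [wedge_jn, List.map_map]
        exact jn_eq_zero (by
          intro a ha
          rcases List.mem_map.mp ha with ⟨B, hB, rfl⟩
          exact hhead B hB)
      have hsw : jn (L.map t) ⋎ s A = s A ⋎ jn (L.map t) := vcomm h1
      rw [List.map_cons, List.map_cons, List.map_cons, jn_cons, jn_cons, jn_cons,
        SBA.vee_assoc, ← SBA.vee_assoc (jn (L.map t)) (s A) (jn (L.map s)), hsw,
        SBA.vee_assoc (s A) (jn (L.map t)) (jn (L.map s)), ih htail,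
        ← SBA.vee_assoc]

lemma jn_map_zero {κ : Type w} {L L' : List κ} {t s : κ → T}
    (h : ∀ A ∈ L, ∀ B ∈ L', t A ⋏ s B = SBA.zero) :
    jn (L.map t) ⋏ jn (L'.map s) = SBA.zero := by
  rw [jn_wedge, List.map_map]
  refine jn_eq_zero ?_
  intro a ha
  rcases List.mem_map.mp ha with ⟨A, hA, rfl⟩
  simp only [Function.comp]
  rw [wedge_jn, List.map_map]
  refine jn_eq_zero ?_
  intro b hb
  rcases List.mem_map.mp hb with ⟨B, hB, rfl⟩
  exact h A hA B hB

lemma jn_perm {l l' : List T} (p : l.Perm l')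
    (hp : l.Pairwise fun a b => a ⋏ b = SBA.zero) : jn l = jn l' := by
  induction p with
  | nil => rfl
  | cons x p ih =>
      rw [jn_cons, jn_cons, ih (List.Pairwise.of_cons hp)]
  | swap x y l =>
      have hxy : y ⋏ x = SBA.zero := (List.pairwise_cons.mp hp).1 x (by simp)
      rw [jn_cons, jn_cons, jn_cons, jn_cons, ← SBA.vee_assoc, ← SBA.vee_assoc,
        vcomm hxy]
  | trans p₁ p₂ ih₁ ih₂ =>
      have hp₂ := hp.perm p₁ (@fun _ _ h => worth_symm h)
      rw [ih₁ hp, ih₂ hp₂]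

end Ident2

/-! ### Splittings of a list -/

/-- All ways to split a list into a pair of complementary sublists.  The first
component comes out in reversed relative order. -/
def splits {α : Type w} : List α → List (List α × List α)
  | [] => [([], [])]
  | a :: l => (splits l).flatMap fun p => [(p.1 ++ [a], p.2), (p.1, a :: p.2)]

lemma flatMap_pair_length {α : Type w} {β : Type v} (L : List α) (u v : α → β) :
    (L.flatMap fun b => [u b, v b]).length = 2 * L.length := by
  induction L with
  | nil => rfl
  | cons b L ih =>
      simp only [List.flatMap_cons, List.length_append, List.length_cons,
        List.length_nil, ih]
      omega

lemma splits_length {α : Type w} (l : List α) : (splits l).length = 2 ^ l.length := by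
  induction l with
  | nil => rfl
  | cons a l ih =>
      show ((splits l).flatMap fun p => [(p.1 ++ [a], p.2), (p.1, a :: p.2)]).length = _
      rw [flatMap_pair_length, ih, List.length_cons, pow_succ]
      ring

lemma splits_spec {α : Type w} (l : List α) :
    ∀ p ∈ splits l, List.Sublist p.1 l.reverse ∧ List.Sublist p.2 l ∧ (p.1 ++ p.2).Perm l := by
  induction l with
  | nil =>
      intro p hp
      simp only [splits, List.mem_singleton] at hp
      subst hp; simp
  | cons a l ih =>
      intro p hp
      rcases List.mem_flatMap.mp hp with ⟨q, hq, hpq⟩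
      obtain ⟨h1, h2, h3⟩ := ih q hq
      simp only [List.mem_cons, List.mem_singleton, List.not_mem_nil, or_false] at hpq
      rcases hpq with rfl | rfl
      · refine ⟨?_, ?_, ?_⟩
        · rw [List.reverse_cons]; exact h1.append (List.Sublist.refl [a])
        · exact h2.trans (List.sublist_cons_self a l)
        · have : (q.1 ++ [a]) ++ q.2 = q.1 ++ a :: q.2 := by
            rw [List.append_assoc]; rfl
          rw [this]
          exact List.perm_middle.trans (h3.cons a)
      · refine ⟨?_, ?_, ?_⟩
        · rw [List.reverse_cons]; exact h1.trans (List.sublist_append_left _ _)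
        · exact h2.cons₂ a
        · exact (List.perm_middle).trans (h3.cons a)

lemma splits_complete {α : Type w} [DecidableEq α] (l : List α) :
    ∀ A : Finset α, (∀ x ∈ A, x ∈ l) → A ∈ (splits l).map (fun p => p.1.toFinset) := by
  induction l with
  | nil =>
      intro A h
      have hA : A = ∅ := Finset.eq_empty_of_forall_notMem (fun x hx => by
        simpa using h x hx)
      subst hA
      simp [splits]
  | cons a l ih =>
      intro A h
      by_cases ha : a ∈ A
      · obtain ⟨p, hp, hpA⟩ := List.mem_map.mp (ih (A.erase a) (fun y hy => by
          have hyA := Finset.mem_of_mem_erase hy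
          have hya := Finset.ne_of_mem_erase hy
          rcases List.mem_cons.mp (h y hyA) with h' | h'
          · exact absurd h' hya
          · exact h'))
        refine List.mem_map.mpr ⟨(p.1 ++ [a], p.2), List.mem_flatMap.mpr ⟨p, hp, by simp⟩, ?_⟩
        show (p.1 ++ [a]).toFinset = A
        rw [List.toFinset_append, hpA]
        show A.erase a ∪ ({a} : Finset α) = A
        rw [Finset.union_comm, ← Finset.insert_eq, Finset.insert_erase ha]
      · obtain ⟨p, hp, hpA⟩ := List.mem_map.mp (ih A (fun y hy => by
          rcases List.mem_cons.mp (h y hy) with h' | h'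
          · exact absurd hy (h' ▸ ha)
          · exact h'))
        exact List.mem_map.mpr ⟨(p.1, a :: p.2), List.mem_flatMap.mpr ⟨p, hp, by simp⟩, hpA⟩

lemma splits_map {α : Type w} {β : Type v} (f : α → β) (l : List α) :
    splits (l.map f) = (splits l).map fun p => (p.1.map f, p.2.map f) := by
  induction l with
  | nil => rfl
  | cons a l ih =>
      show (splits (l.map f)).flatMap _ = ((splits l).flatMap _).map _
      rw [ih, List.map_flatMap, List.flatMap_map]
      simp

section Decomp
variable {T : Type v} [SBA T] [LeftHanded T]

lemma jn_bind_pair {κ : Type w} (L : List κ) (u v : κ → T) :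
    jn (L.flatMap fun b => [u b, v b]) = jn (L.map fun b => u b ⋎ v b) := by
  induction L with
  | nil => rfl
  | cons b L ih =>
      rw [List.flatMap_cons, jn_append, List.map_cons, ih]
      show (u b ⋎ (v b ⋎ SBA.zero)) ⋎ _ = _
      rw [SBA.vee_zero, jn_cons, SBA.vee_assoc]

lemma atom_step (x a : T) (B C : List T) :
    (mt x (B ++ [a]) ∖ jn C) ⋎ (mt x B ∖ jn (a :: C)) = mt x B ∖ jn C := by
  rw [mt_concat, D1, jn_cons, ← D2]
  exact dA1 _ _

/-- The atomic decomposition of an element along a list of elements. -/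
theorem decomp (l : List T) (x : T) :
    jn ((splits l).map fun p => mt x p.1 ∖ jn p.2) = x := by
  induction l with
  | nil =>
      show (x ∖ jn []) ⋎ SBA.zero = x
      rw [jn_nil, SBA.vee_zero, diff_zero']
  | cons a l ih =>
      show jn (((splits l).flatMap fun p => [(p.1 ++ [a], p.2), (p.1, a :: p.2)]).map _) = x
      rw [List.map_flatMap]
      have hb : ((splits l).flatMap fun p =>
            List.map (fun p => mt x p.1 ∖ jn p.2) [(p.1 ++ [a], p.2), (p.1, a :: p.2)]) =
          (splits l).flatMap fun p =>
            [mt x (p.1 ++ [a]) ∖ jn p.2, mt x p.1 ∖ jn (a :: p.2)] := rfl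
      rw [hb, jn_bind_pair]
      have hc : ((splits l).map fun p =>
          (mt x (p.1 ++ [a]) ∖ jn p.2) ⋎ (mt x p.1 ∖ jn (a :: p.2))) =
          (splits l).map fun p => mt x p.1 ∖ jn p.2 := by
        refine List.map_congr_left ?_
        intro p _
        exact atom_step x a p.1 p.2
      rw [hc, ih]

end Decomp

/-! ### The concrete free left-handed SBA on `n` generators -/

/-- The free left-handed skew Boolean algebra on `n` generators. -/
abbrev FF (n : ℕ) : Type u := ∀ A : Finset (Fin n), Option (ULift.{u} {i : Fin n // i ∈ A})

/-- The generators of `FF n`. -/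
abbrev genF (n : ℕ) (i : Fin n) : FF.{u} n :=
  fun A => if h : i ∈ A then some ⟨⟨i, h⟩⟩ else none

section FreeAlg
variable {n : ℕ}

@[simp] lemma FF_wedge_apply (u v : FF.{u} n) (A : Finset (Fin n)) :
    (u ⋏ v) A = u A ⋏ v A := rfl
@[simp] lemma FF_vee_apply (u v : FF.{u} n) (A : Finset (Fin n)) :
    (u ⋎ v) A = u A ⋎ v A := rfl
@[simp] lemma FF_diff_apply (u v : FF.{u} n) (A : Finset (Fin n)) :
    (u ∖ v) A = u A ∖ v A := rfl
@[simp] lemma FF_zero_apply (A : Finset (Fin n)) :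
    (SBA.zero : FF.{u} n) A = none := rfl

end FreeAlg

section OptEval
variable {γ : Type v}

@[simp] lemma ow_some {a : Option γ} {b : γ} : a ⋏ some b = a := rfl
@[simp] lemma ow_none {a : Option γ} : a ⋏ none = (none : Option γ) := rfl
@[simp] lemma ov_some {a : Option γ} {b : γ} : a ⋎ some b = some b := rfl
@[simp] lemma ov_none {a : Option γ} : a ⋎ none = a := rfl
@[simp] lemma od_some {a : Option γ} {b : γ} : a ∖ some b = (none : Option γ) := rfl
@[simp] lemma od_none {a : Option γ} : a ∖ none = a := rfl
@[simp] lemma ozero : (SBA.zero : Option γ) = none := rfl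

lemma ow_none_left {a : Option γ} : (none : Option γ) ⋏ a = none := by cases a <;> rfl
lemma ov_none_left {a : Option γ} : (none : Option γ) ⋎ a = a := by cases a <;> rfl
lemma od_none_left {a : Option γ} : (none : Option γ) ∖ a = none := by cases a <;> rfl

lemma omt_all_some {lo : List (Option γ)} (h : ∀ o ∈ lo, o ≠ none) (x : Option γ) :
    mt x lo = x := by
  induction lo generalizing x with
  | nil => rfl
  | cons o lo ih =>
      obtain ⟨c, rfl⟩ := Option.ne_none_iff_exists'.mp (h o (by simp))
      show mt (x ⋏ some c) lo = x
      exact ih (fun o ho => h o (by simp [ho])) x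

lemma omt_from_none (lo : List (Option γ)) : mt (none : Option γ) lo = none := by
  induction lo with
  | nil => rfl
  | cons o lo ih =>
      show mt ((none : Option γ) ⋏ o) lo = none
      rw [ow_none_left]
      exact ih

lemma omt_none {lo : List (Option γ)} (h : none ∈ lo) (x : Option γ) :
    mt x lo = (none : Option γ) := by
  induction lo generalizing x with
  | nil => simp at h
  | cons o lo ih =>
      rcases List.mem_cons.mp h with h' | h'
      · subst h'
        show mt (x ⋏ none) lo = none
        rw [ow_none]
        exact omt_from_none lo
      · exact ih h' _

lemma ojn_all_none {lo : List (Option γ)} (h : ∀ o ∈ lo, o = none) :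
    jn lo = (none : Option γ) := by
  induction lo with
  | nil => rfl
  | cons o lo ih =>
      rw [jn_cons, h o (by simp), ih (fun o ho => h o (by simp [ho]))]
      rfl

lemma ojn_ne_none {lo : List (Option γ)} {o : Option γ} (hmem : o ∈ lo) (ho : o ≠ none) :
    jn lo ≠ none := by
  induction lo with
  | nil => simp at hmem
  | cons a lo ih =>
      rcases List.mem_cons.mp hmem with h' | h'
      · subst h'
        rw [jn_cons]
        cases hlo : jn lo
        · rw [ov_none]; exact ho
        · simp [ov_some]
      · rw [jn_cons]
        cases hlo : jn lo
        · exact absurd hlo (ih h')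
        · simp [ov_some]

lemma ojn_single {lo₁ lo₂ : List (Option γ)} (h1 : ∀ o ∈ lo₁, o = none)
    (h2 : ∀ o ∈ lo₂, o = none) (v : Option γ) : jn (lo₁ ++ v :: lo₂) = v := by
  have htail : jn (v :: lo₂) = v := by
    rw [jn_cons, ojn_all_none h2, ov_none]
  induction lo₁ with
  | nil => exact htail
  | cons a lo₁ ih =>
      rw [List.cons_append, jn_cons, ih (fun o ho => h1 o (by simp [ho])),
        h1 a (by simp), ov_none_left]

end OptEval

/-! ### The homomorphism `FF n → T` induced by a map of generators -/

section HomConstr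
variable {T : Type u} [SBA T] [LeftHanded T] {n : ℕ}

/-- Sorted list of a finset. -/
abbrev sortA (A : Finset (Fin n)) : List (Fin n) := A.sort (· ≤ ·)

/-- Meet-list of an atom. -/
abbrev awl (g : Fin n → T) (A : Finset (Fin n)) : List T := ((sortA A).reverse).map g
/-- Join-list (subtractor) of an atom. -/
abbrev aql (g : Fin n → T) (A : Finset (Fin n)) : List T := (sortA Aᶜ).map g

/-- The atom of `T` associated to coordinate `A` and generator `i`. -/
abbrev atF (g : Fin n → T) (A : Finset (Fin n)) (i : Fin n) : T :=
  mt (g i) (awl g A) ∖ jn (aql g A)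

/-- The summand of `f w` at coordinate `A`. -/
abbrev termF (g : Fin n → T) (A : Finset (Fin n)) (w : FF.{u} n) : T :=
  (w A).elim SBA.zero (fun u => atF g A u.down.1)

/-- Canonical list of all coordinates. -/
noncomputable def UL (n : ℕ) : List (Finset (Fin n)) :=
  (Finset.univ : Finset (Finset (Fin n))).toList

/-- The homomorphism induced by `g`. -/
noncomputable def fhom (g : Fin n → T) (w : FF.{u} n) : T := jn ((UL n).map fun A => termF g A w)

variable (g : Fin n → T)

lemma mem_awl {i : Fin n} {A : Finset (Fin n)} (h : i ∈ A) : g i ∈ awl g A := by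
  refine List.mem_map.mpr ⟨i, ?_, rfl⟩
  rw [List.mem_reverse, Finset.mem_sort]
  exact h

lemma mem_aql {k : Fin n} {A : Finset (Fin n)} (h : k ∉ A) : g k ∈ aql g A := by
  refine List.mem_map.mpr ⟨k, ?_, rfl⟩
  rw [Finset.mem_sort, Finset.mem_compl]
  exact h

lemma termF_none {A : Finset (Fin n)} {w : FF.{u} n} (h : w A = none) :
    termF g A w = SBA.zero := by simp [termF, h]

lemma termF_some {A : Finset (Fin n)} {w : FF.{u} n} {u : ULift {i : Fin n // i ∈ A}}
    (h : w A = some u) : termF g A w = atF g A u.down.1 := by simp [termF, h]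

lemma at_meet {A : Finset (Fin n)} {i j : Fin n} (hj : j ∈ A) :
    atF g A i ⋏ atF g A j = atF g A i := sameMeet (mt_wedge_mt (mem_awl g hj)) _

lemma at_join {A : Finset (Fin n)} {i j : Fin n} (hj : j ∈ A) :
    atF g A i ⋎ atF g A j = atF g A j := sameJoin (mt_wedge_mt (mem_awl g hj)) _

lemma at_diff {A : Finset (Fin n)} {i j : Fin n} (hj : j ∈ A) :
    atF g A i ∖ atF g A j = SBA.zero := sameDiff (mt_wedge_mt (mem_awl g hj)) _

lemma at_orth_aux {A B : Finset (Fin n)} {i j k : Fin n} (hk : k ∈ B) (hkA : k ∉ A) :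
    atF g A i ⋏ atF g B j = SBA.zero := by
  have h1 : atF g A i ⋏ jn (aql g A) = SBA.zero := diff_wedge_self _ _
  have h2 : g k ⋏ jn (aql g A) = g k := mem_wedge_jn (mem_aql g hkA)
  have h3 : atF g A i ⋏ g k = SBA.zero := kill_of_le h1 h2
  have h4 : atF g B j ⋏ g k = atF g B j := by
    calc atF g B j ⋏ g k = (atF g B j ⋏ mt (g j) (awl g B)) ⋏ g k := by rw [diff_le2]
    _ = atF g B j ⋏ (mt (g j) (awl g B) ⋏ g k) := SBA.wedge_assoc _ _ _
    _ = atF g B j ⋏ mt (g j) (awl g B) := by rw [mt_mem_absorb (mem_awl g hk)]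
    _ = atF g B j := diff_le2 _ _
  exact kill_of_le h3 h4

lemma at_orth {A B : Finset (Fin n)} {i j : Fin n} (hne : A ≠ B) :
    atF g A i ⋏ atF g B j = SBA.zero := by
  by_cases hsub : B ⊆ A
  · obtain ⟨k, hkA, hkB⟩ := Finset.exists_of_ssubset (hsub.ssubset_of_ne hne.symm)
    exact worth_symm (at_orth_aux g hkA hkB)
  · obtain ⟨k, hkB, hkA⟩ := Finset.not_subset.mp hsub
    exact at_orth_aux g hkB hkA

lemma term_orth {A B : Finset (Fin n)} (hne : A ≠ B) (u v : FF.{u} n) :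
    termF g A u ⋏ termF g B v = SBA.zero := by
  cases hu : u A with
  | none => rw [termF_none g hu, SBA.zero_wedge]
  | some a =>
      cases hv : v B with
      | none => rw [termF_none g hv, SBA.wedge_zero]
      | some b => rw [termF_some g hu, termF_some g hv]; exact at_orth g hne

lemma UL_nodup : (UL n).Nodup := Finset.nodup_toList _
lemma UL_mem (A : Finset (Fin n)) : A ∈ UL n := by
  rw [UL, Finset.mem_toList]; exact Finset.mem_univ A

lemma term_meet (A : Finset (Fin n)) (u v : FF.{u} n) :
    termF g A (u ⋏ v) = termF g A u ⋏ termF g A v := by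
  have hw : (u ⋏ v) A = u A ⋏ v A := rfl
  cases hu : u A with
  | none =>
      cases hv : v A with
      | none =>
          rw [termF_none g (show (u ⋏ v) A = none by rw [hw, hu, hv]; rfl),
            termF_none g hu, termF_none g hv, SBA.zero_wedge]
      | some b =>
          rw [termF_none g (show (u ⋏ v) A = none by rw [hw, hu, hv]; rfl),
            termF_none g hu, SBA.zero_wedge]
  | some a =>
      cases hv : v A with
      | none =>
          rw [termF_none g (show (u ⋏ v) A = none by rw [hw, hu, hv]; rfl),
            termF_some g hu, termF_none g hv, SBA.wedge_zero]
      | some b =>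
          rw [termF_some g (show (u ⋏ v) A = some a by rw [hw, hu, hv]; rfl),
            termF_some g hu, termF_some g hv]
          exact (at_meet g b.down.2).symm

lemma term_join (A : Finset (Fin n)) (u v : FF.{u} n) :
    termF g A (u ⋎ v) = termF g A u ⋎ termF g A v := by
  have hw : (u ⋎ v) A = u A ⋎ v A := rfl
  cases hu : u A with
  | none =>
      cases hv : v A with
      | none =>
          rw [termF_none g (show (u ⋎ v) A = none by
              rw [hw, hu, hv]; exact ov_none_left),
            termF_none g hu, termF_none g hv, SBA.zero_vee]
      | some b =>
          rw [termF_some g (show (u ⋎ v) A = some b by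
              rw [hw, hu, hv]; exact ov_none_left),
            termF_none g hu, termF_some g hv, SBA.zero_vee]
  | some a =>
      cases hv : v A with
      | none =>
          rw [termF_some g (show (u ⋎ v) A = some a by rw [hw, hu, hv]; rfl),
            termF_some g hu, termF_none g hv, SBA.vee_zero]
      | some b =>
          rw [termF_some g (show (u ⋎ v) A = some b by rw [hw, hu, hv]; rfl),
            termF_some g hu, termF_some g hv]
          exact (at_join g b.down.2).symm

lemma term_diff (A : Finset (Fin n)) (u v : FF.{u} n) :
    termF g A (u ∖ v) = termF g A u ∖ termF g A v := by
  have hw : (u ∖ v) A = u A ∖ v A := rfl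
  cases hu : u A with
  | none =>
      cases hv : v A with
      | none =>
          rw [termF_none g (show (u ∖ v) A = none by
              rw [hw, hu, hv]; exact od_none_left),
            termF_none g hu, termF_none g hv, zero_diff']
      | some b =>
          rw [termF_none g (show (u ∖ v) A = none by
              rw [hw, hu, hv]; exact od_none_left),
            termF_none g hu, termF_some g hv, zero_diff']
  | some a =>
      cases hv : v A with
      | none =>
          rw [termF_some g (show (u ∖ v) A = some a by rw [hw, hu, hv]; rfl),
            termF_some g hu, termF_none g hv, diff_zero']
      | some b =>
          rw [termF_none g (show (u ∖ v) A = none by rw [hw, hu, hv]; rfl),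
            termF_some g hu, termF_some g hv]
          exact (at_diff g b.down.2).symm

lemma fhom_pairwise (u v : FF.{u} n) :
    (UL n).Pairwise fun A B =>
      (termF g A u ⋏ termF g B v = SBA.zero) ∧
        (termF g B u ⋏ termF g A v = SBA.zero) :=
  (UL_nodup (n := n)).imp (fun hne => ⟨term_orth g hne u v, term_orth g hne.symm u v⟩)

lemma fhom_wedge (u v : FF.{u} n) : fhom g (u ⋏ v) = fhom g u ⋏ fhom g v := by
  rw [fhom, fhom, fhom, jn_map_meet _ _ _ (fhom_pairwise g u v)]
  exact congrArg jn (List.map_congr_left (fun A _ => term_meet g A u v))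

lemma fhom_vee (u v : FF.{u} n) : fhom g (u ⋎ v) = fhom g u ⋎ fhom g v := by
  rw [fhom, fhom, fhom, jn_map_join (UL n) (fun A => termF g A u)
    (fun A => termF g A v)
    ((UL_nodup (n := n)).imp (fun hne => term_orth g hne v u))]
  exact congrArg jn (List.map_congr_left (fun A _ => term_join g A u v))

lemma fhom_zero : fhom g (SBA.zero : FF.{u} n) = SBA.zero := by
  refine jn_eq_zero ?_
  intro a ha
  rcases List.mem_map.mp ha with ⟨A, _, rfl⟩
  exact termF_none g rfl

lemma fhom_diff (u v : FF.{u} n) : fhom g (u ∖ v) = fhom g u ∖ fhom g v := by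
  have hmeet : fhom g u ⋏ fhom g v =
      jn ((UL n).map fun A => termF g A u ⋏ termF g A v) :=
    jn_map_meet _ _ _ (fhom_pairwise g u v)
  have hsub1 : ∀ {A B : Finset (Fin n)}, A ≠ B →
      (termF g A u ∖ termF g A v) ⋏ (termF g B u ⋏ termF g B v) = SBA.zero := by
    intro A B hne
    exact subOrth (term_orth g hne u u) (diff_le2 _ _) (lhw _ _)
  have h1 : jn ((UL n).map fun A => termF g A u ⋏ termF g A v) ⋎
      (fhom g u ∖ fhom g v) = fhom g u := by
    rw [← hmeet]; exact dA1 _ _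
  have h3 : jn ((UL n).map fun A => termF g A u ⋏ termF g A v) ⋏
      (fhom g u ∖ fhom g v) = SBA.zero := by
    rw [← hmeet]; exact dA2 _ _
  have h6 : fhom g u ⋏ (fhom g u ∖ fhom g v) = fhom g u ∖ fhom g v := diff_le1 _ _
  have h2 : jn ((UL n).map fun A => termF g A u ⋏ termF g A v) ⋎
      jn ((UL n).map fun A => termF g A u ∖ termF g A v) = fhom g u := by
    rw [jn_map_join (UL n) (fun A => termF g A u ⋏ termF g A v)
      (fun A => termF g A u ∖ termF g A v)
      ((UL_nodup (n := n)).imp (fun hne => hsub1 hne))]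
    rw [fhom]
    exact congrArg jn (List.map_congr_left (fun A _ => dA1 _ _))
  have h4 : jn ((UL n).map fun A => termF g A u ∖ termF g A v) ⋏
      jn ((UL n).map fun A => termF g A u ⋏ termF g A v) = SBA.zero := by
    refine jn_map_zero ?_
    intro A _ B _
    by_cases hne : A = B
    · subst hne; exact dA3 _ _
    · exact hsub1 hne
  have h5 : jn ((UL n).map fun A => termF g A u ∖ termF g A v) ⋏ fhom g u =
      jn ((UL n).map fun A => termF g A u ∖ termF g A v) := by
    rw [fhom, jn_map_meet (UL n) (fun A => termF g A u ∖ termF g A v)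
      (fun A => termF g A u) ((UL_nodup (n := n)).imp (fun hne =>
      ⟨subOrth (term_orth g hne u u) (diff_le2 _ _) (widem _),
       subOrth (term_orth g hne.symm u u) (diff_le2 _ _) (widem _)⟩))]
    exact congrArg jn (List.map_congr_left (fun A _ => diff_le2 _ _))
  have hz := uniqC h1 h2 h3 h4 h5 h6
  rw [fhom]
  rw [List.map_congr_left (fun A (_ : A ∈ UL n) => term_diff g A u v)]
  exact hz.symm

lemma fhom_isHom : IsHom (fhom g : FF.{u} n → T) :=
  ⟨fhom_wedge g, fhom_vee g, fhom_diff g, fhom_zero g⟩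

/-- The candidate value of the extension at a coordinate. -/
abbrev gAt (g : Fin n → T) (i : Fin n) (A : Finset (Fin n)) : T :=
  if i ∈ A then atF g A i else SBA.zero

lemma gAt_orth {i : Fin n} {A B : Finset (Fin n)} (hne : A ≠ B) :
    gAt g i A ⋏ gAt g i B = SBA.zero := by
  by_cases hA : i ∈ A
  · by_cases hB : i ∈ B
    · simp only [gAt, if_pos hA, if_pos hB]; exact at_orth g hne
    · simp only [gAt, if_pos hA, if_neg hB]; exact SBA.wedge_zero _
  · simp only [gAt, if_neg hA]; exact SBA.zero_wedge _

theorem fhom_gen (i : Fin n) : fhom g (genF n i) = g i := by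
  have hmemidx : ∀ j : Fin n, j ∈ List.finRange n := List.mem_finRange
  have hidxnd : (List.finRange n).Nodup := List.nodup_finRange n
  have hidxsorted : (List.finRange n).Pairwise (· ≤ ·) := List.pairwise_le_finRange n
  -- the decomposition of `g i` along all the generators
  have hdec := decomp ((List.finRange n).map g) (g i)
  rw [splits_map, List.map_map] at hdec
  -- identify each summand
  have hGi : ∀ p ∈ splits (List.finRange n),
      ((fun p : List T × List T => mt (g i) p.1 ∖ jn p.2) ∘
        (fun p : List (Fin n) × List (Fin n) => (p.1.map g, p.2.map g))) p =
      gAt g i p.1.toFinset := by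
    intro p hp
    obtain ⟨h1, h2, h3⟩ := splits_spec _ p hp
    have hnd : (p.1 ++ p.2).Nodup := (h3.nodup_iff).mpr hidxnd
    have hmem : ∀ j : Fin n, j ∈ p.1 ∨ j ∈ p.2 :=
      fun j => List.mem_append.mp (h3.mem_iff.mpr (hmemidx j))
    have hdisj : ∀ j, j ∈ p.1 → j ∉ p.2 := by
      intro j hj1 hj2
      exact (List.nodup_append.mp hnd).2.2 j hj1 j hj2 rfl
    show mt (g i) (p.1.map g) ∖ jn (p.2.map g) = gAt g i p.1.toFinset
    by_cases hi : i ∈ p.1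
    · have hrev : List.Sublist p.1.reverse (List.finRange n) := by
        have h4 := h1.reverse
        rwa [List.reverse_reverse] at h4
      have hp1nd : p.1.reverse.Nodup := hidxnd.sublist hrev
      have hp1sorted : p.1.reverse.Pairwise (· ≤ ·) := hidxsorted.sublist hrev
      have he1 : p.1.reverse = sortA p.1.toFinset := by
        refine List.Perm.eq_of_pairwise' hp1sorted (Finset.pairwise_sort _ _) ?_
        refine (List.perm_ext_iff_of_nodup hp1nd (Finset.sort_nodup _ _)).mpr ?_
        intro a
        rw [List.mem_reverse, Finset.mem_sort, List.mem_toFinset]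
      have he1' : p.1 = (sortA p.1.toFinset).reverse := by
        rw [← he1, List.reverse_reverse]
      have hq : p.2 = sortA (p.1.toFinsetᶜ) := by
        have hp2nd : p.2.Nodup := hidxnd.sublist h2
        have hp2sorted : p.2.Pairwise (· ≤ ·) := hidxsorted.sublist h2
        refine List.Perm.eq_of_pairwise' hp2sorted (Finset.pairwise_sort _ _) ?_
        refine (List.perm_ext_iff_of_nodup hp2nd (Finset.sort_nodup _ _)).mpr ?_
        intro a
        rw [Finset.mem_sort, Finset.mem_compl, List.mem_toFinset]
        constructor
        · intro ha2 ha1; exact hdisj a ha1 ha2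
        · intro ha1
          rcases hmem a with h' | h'
          · exact absurd h' ha1
          · exact h'
      have hiA : i ∈ p.1.toFinset := List.mem_toFinset.mpr hi
      conv_lhs => rw [he1', hq]
      rw [show gAt g i p.1.toFinset = atF g p.1.toFinset i from if_pos hiA]
    · have hi2 : i ∈ p.2 := (hmem i).resolve_left hi
      rw [show gAt g i p.1.toFinset = SBA.zero from
        if_neg (fun hmem1 => hi (List.mem_toFinset.mp hmem1))]
      exact diff_eq_zero (absorb_jn (mt_absorb (widem (g i)) (p.1.map g))
        (List.mem_map.mpr ⟨i, hi2, rfl⟩))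
  rw [List.map_congr_left hGi] at hdec
  have hshape : (splits (List.finRange n)).map (fun p => gAt g i p.1.toFinset) =
      ((splits (List.finRange n)).map fun p => p.1.toFinset).map (gAt g i) := by
    rw [List.map_map]; rfl
  rw [hshape] at hdec
  -- replace the coordinate list by the canonical one, up to permutation
  have hsub : ∀ A ∈ UL n, A ∈ (splits (List.finRange n)).map fun p => p.1.toFinset :=
    fun A _ => splits_complete _ A (fun y _ => hmemidx y)
  have hsubperm : List.Subperm (UL n)
      ((splits (List.finRange n)).map fun p => p.1.toFinset) :=
    List.subperm_of_subset (UL_nodup (n := n)) hsub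
  have hlen : (((splits (List.finRange n)).map fun p => p.1.toFinset)).length ≤
      (UL n).length := by
    rw [List.length_map, splits_length, List.length_finRange, UL,
      Finset.length_toList, Finset.card_univ, Fintype.card_finset, Fintype.card_fin]
  have hperm : (UL n).Perm ((splits (List.finRange n)).map fun p => p.1.toFinset) :=
    hsubperm.perm_of_length_le hlen
  have hnd2 : (((splits (List.finRange n)).map fun p => p.1.toFinset)).Nodup :=
    (hperm.nodup_iff).mp (UL_nodup (n := n))
  have hpair : ((((splits (List.finRange n)).map fun p => p.1.toFinset)).map
      (gAt g i)).Pairwise (fun a b => a ⋏ b = SBA.zero) := by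
    refine List.pairwise_map.mpr ?_
    exact List.Pairwise.imp (fun hne => gAt_orth g hne) hnd2
  have hj := jn_perm ((hperm.symm).map (gAt g i)) hpair
  rw [hj] at hdec
  -- identify with `fhom`
  have hterm : ∀ A ∈ UL n, termF g A (genF n i) = gAt g i A := by
    intro A _
    by_cases hA : i ∈ A
    · rw [termF_some g (show genF n i A = some ⟨⟨i, hA⟩⟩ from dif_pos hA),
        show gAt g i A = atF g A i from if_pos hA]
    · rw [termF_none g (show genF n i A = none from dif_neg hA),
        show gAt g i A = SBA.zero from if_neg hA]
  rw [fhom, List.map_congr_left hterm]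
  exact hdec

end HomConstr

/-! ### `fhom genF` is the identity on `FF n` -/

section IdF
variable {n : ℕ}

lemma mt_apply (u : FF.{u} n) (l : List (FF.{u} n)) (B : Finset (Fin n)) :
    (mt u l) B = mt (u B) (l.map (· B)) := by
  induction l generalizing u with
  | nil => rfl
  | cons a l ih => exact ih (u ⋏ a)

lemma jn_apply (l : List (FF.{u} n)) (B : Finset (Fin n)) :
    (jn l) B = jn (l.map (· B)) := by
  induction l with
  | nil => rfl
  | cons a l ih =>
      show a B ⋎ (jn l) B = a B ⋎ jn (l.map (· B))
      rw [ih]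

lemma awl_eval_some {A B : Finset (Fin n)} (i : Fin n) (hsub : A ⊆ B) :
    (mt (genF n i) (awl (genF n) A)) B = genF n i B := by
  rw [mt_apply]
  refine omt_all_some ?_ _
  intro o ho
  rcases List.mem_map.mp ho with ⟨w, hw, rfl⟩
  rcases List.mem_map.mp hw with ⟨j, hj, rfl⟩
  have hjA : j ∈ A := by
    rw [List.mem_reverse, Finset.mem_sort] at hj; exact hj
  have hjB : j ∈ B := hsub hjA
  simp [genF, hjB]

lemma awl_eval_none {A B : Finset (Fin n)} (i : Fin n) (hsub : ¬ A ⊆ B) :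
    (mt (genF n i) (awl (genF n) A)) B = none := by
  rw [mt_apply]
  obtain ⟨j, hjA, hjB⟩ := Finset.not_subset.mp hsub
  refine omt_none ?_ _
  refine List.mem_map.mpr ⟨genF n j, List.mem_map.mpr ⟨j, ?_, rfl⟩, ?_⟩
  · rw [List.mem_reverse, Finset.mem_sort]; exact hjA
  · simp [genF, hjB]

lemma aql_eval_none {A B : Finset (Fin n)} (hsub : B ⊆ A) :
    (jn (aql (genF n) A)) B = none := by
  rw [jn_apply]
  refine ojn_all_none ?_
  intro o ho
  rcases List.mem_map.mp ho with ⟨w, hw, rfl⟩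
  rcases List.mem_map.mp hw with ⟨j, hj, rfl⟩
  rw [Finset.mem_sort, Finset.mem_compl] at hj
  have hjB : j ∉ B := fun h => hj (hsub h)
  simp [genF, hjB]

lemma aql_eval_ne {A B : Finset (Fin n)} (hsub : ¬ B ⊆ A) :
    (jn (aql (genF n) A)) B ≠ none := by
  rw [jn_apply]
  obtain ⟨j, hjB, hjA⟩ := Finset.not_subset.mp hsub
  refine ojn_ne_none (List.mem_map.mpr ⟨genF n j, List.mem_map.mpr ⟨j, ?_, rfl⟩, rfl⟩) ?_
  · rw [Finset.mem_sort, Finset.mem_compl]; exact hjA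
  · simp [genF, hjB]

lemma atF_self {A : Finset (Fin n)} {i : Fin n} (h : i ∈ A) :
    atF (genF n) A i A = some ⟨⟨i, h⟩⟩ := by
  have h1 : (atF (genF n) A i) A =
      (mt (genF n i) (awl (genF n) A)) A ∖ (jn (aql (genF n) A)) A := rfl
  rw [h1, awl_eval_some i (Finset.Subset.refl A), aql_eval_none (Finset.Subset.refl A),
    od_none]
  simp [genF, h]

lemma atF_ne {A B : Finset (Fin n)} {i : Fin n} (hne : B ≠ A) :
    atF (genF n) A i B = none := by
  have h1 : (atF (genF n) A i) B =
      (mt (genF n i) (awl (genF n) A)) B ∖ (jn (aql (genF n) A)) B := rfl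
  by_cases hsub : A ⊆ B
  · have hnsub : ¬ B ⊆ A := fun h' => hne (Finset.Subset.antisymm h' hsub)
    obtain ⟨c, hc⟩ := Option.ne_none_iff_exists'.mp (aql_eval_ne hnsub)
    rw [h1, hc, od_some]
  · rw [h1, awl_eval_none i hsub, od_none_left]

lemma term_apply_self (A : Finset (Fin n)) (w : FF.{u} n) :
    (termF (genF n) A w) A = w A := by
  cases hw : w A with
  | none => rw [termF_none (genF n) hw, FF_zero_apply]
  | some u =>
      rw [termF_some (genF n) hw]
      exact atF_self u.down.2

lemma term_apply_ne {A B : Finset (Fin n)} (hne : B ≠ A) (w : FF.{u} n) :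
    (termF (genF n) A w) B = none := by
  cases hw : w A with
  | none => rw [termF_none (genF n) hw, FF_zero_apply]
  | some u => rw [termF_some (genF n) hw]; exact atF_ne hne

theorem idF (w : FF.{u} n) : fhom (genF n) w = w := by
  funext B
  have h1 : (fhom (genF n) w) B =
      jn (((UL n).map fun A => termF (genF n) A w).map (· B)) := by
    rw [fhom, jn_apply]
  rw [h1, List.map_map]
  obtain ⟨l₁, l₂, hsplit⟩ := List.append_of_mem (UL_mem B)
  have hnd := UL_nodup (n := n)
  rw [hsplit] at hnd
  have hB1 : B ∉ l₁ := fun h =>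
    (List.nodup_append.mp hnd).2.2 B h B List.mem_cons_self rfl
  have hB2 : B ∉ l₂ := (List.nodup_cons.mp (List.nodup_append.mp hnd).2.1).1
  rw [hsplit, List.map_append, List.map_cons]
  have hh1 : ∀ o ∈ l₁.map ((· B) ∘ fun A => termF (genF n) A w), o = none := by
    intro o ho
    rcases List.mem_map.mp ho with ⟨A, hA, rfl⟩
    exact term_apply_ne (fun h => hB1 (by rw [h]; exact hA)) w
  have hh2 : ∀ o ∈ l₂.map ((· B) ∘ fun A => termF (genF n) A w), o = none := by
    intro o ho
    rcases List.mem_map.mp ho with ⟨A, hA, rfl⟩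
    exact term_apply_ne (fun h => hB2 (by rw [h]; exact hA)) w
  rw [ojn_single hh1 hh2]
  exact term_apply_self B w

theorem genF_generates : Generates (Set.range (genF n : Fin n → FF.{u} n)) := by
  intro T0 hX h0 hcl
  apply Set.eq_univ_of_forall
  intro w
  have hjn : ∀ l : List (FF.{u} n), (∀ a ∈ l, a ∈ T0) → jn l ∈ T0 := by
    intro l
    induction l with
    | nil => intro _; exact h0
    | cons a l ih =>
        intro h
        exact (hcl a (jn l) (h a (by simp)) (ih (fun b hb => h b (by simp [hb])))).2.1
  have hmt : ∀ (l : List (FF.{u} n)) (u : FF.{u} n), u ∈ T0 → (∀ a ∈ l, a ∈ T0) →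
      mt u l ∈ T0 := by
    intro l
    induction l with
    | nil => intro u hu _; exact hu
    | cons a l ih =>
        intro u hu h
        exact ih (u ⋏ a) (hcl u a hu (h a (by simp))).1 (fun b hb => h b (by simp [hb]))
  have hgens : ∀ (l : List (Fin n)), ∀ a ∈ l.map (genF n), a ∈ T0 := by
    intro l a ha
    rcases List.mem_map.mp ha with ⟨j, _, rfl⟩
    exact hX ⟨j, rfl⟩
  have hat : ∀ (A : Finset (Fin n)) (j : Fin n), atF (genF n) A j ∈ T0 := by
    intro A j
    exact (hcl _ _ (hmt _ _ (hX ⟨j, rfl⟩) (hgens _)) (hjn _ (hgens _))).2.2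
  have hterm : ∀ A : Finset (Fin n), termF (genF n) A w ∈ T0 := by
    intro A
    cases hw : w A with
    | none => rw [termF_none (genF n) hw]; exact h0
    | some u => rw [termF_some (genF n) hw]; exact hat A u.down.1
  have : fhom (genF n) w ∈ T0 := by
    rw [fhom]
    refine hjn _ ?_
    intro a ha
    rcases List.mem_map.mp ha with ⟨A, _, rfl⟩
    exact hterm A
  rwa [idF w] at this

theorem card_FF :
    Nat.card (FF.{u} n) = ∏ m ∈ Finset.Icc 1 n, (m + 1) ^ n.choose m := by
  rw [Nat.card_eq_fintype_card, Fintype.card_pi]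
  have h1 : ∀ A : Finset (Fin n),
      Fintype.card (Option (ULift.{u} {i : Fin n // i ∈ A})) = A.card + 1 := by
    intro A
    rw [Fintype.card_option, Fintype.card_ulift, Fintype.card_coe]
  rw [Finset.prod_congr rfl (fun A _ => h1 A)]
  have hmaps : ∀ A ∈ (Finset.univ : Finset (Finset (Fin n))),
      A.card ∈ Finset.range (n + 1) := by
    intro A _
    rw [Finset.mem_range, Nat.lt_succ_iff]
    have := Finset.card_le_card (Finset.subset_univ A)
    rwa [Finset.card_univ, Fintype.card_fin] at this
  rw [← Finset.prod_fiberwise_of_maps_to hmaps (fun A : Finset (Fin n) => A.card + 1)]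
  have hin : ∀ m ∈ Finset.range (n + 1),
      (∏ A ∈ Finset.univ.filter (fun A : Finset (Fin n) => A.card = m), (A.card + 1)) =
      (m + 1) ^ n.choose m := by
    intro m _
    rw [Finset.prod_congr rfl (fun A hA => by rw [(Finset.mem_filter.mp hA).2]),
      Finset.prod_const]
    congr 1
    have hfil : Finset.univ.filter (fun A : Finset (Fin n) => A.card = m) =
        Finset.powersetCard m (Finset.univ : Finset (Fin n)) := by
      ext A
      simp [Finset.mem_powersetCard, Finset.subset_univ]
    rw [hfil, Finset.card_powersetCard, Finset.card_univ, Fintype.card_fin]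
  rw [Finset.prod_congr rfl hin]
  have hrange : Finset.range (n + 1) = insert 0 (Finset.Icc 1 n) := by
    ext m
    simp only [Finset.mem_range, Finset.mem_insert, Finset.mem_Icc]
    omega
  rw [hrange, Finset.prod_insert (by simp)]
  simp

end IdF

/-! ### Generic homomorphism lemmas -/

section Plumb
variable {S1 S2 S3 : Type u} [SBA S1] [SBA S2] [SBA S3]

lemma hom_id : IsHom (id : S1 → S1) := ⟨fun _ _ => rfl, fun _ _ => rfl, fun _ _ => rfl, rfl⟩

lemma hom_comp {f : S1 → S2} {h : S2 → S3} (hf : IsHom f) (hh : IsHom h) :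
    IsHom (h ∘ f) := by
  refine ⟨fun a b => ?_, fun a b => ?_, fun a b => ?_, ?_⟩
  · show h (f (a ⋏ b)) = h (f a) ⋏ h (f b); rw [hf.1, hh.1]
  · show h (f (a ⋎ b)) = h (f a) ⋎ h (f b); rw [hf.2.1, hh.2.1]
  · show h (f (a ∖ b)) = h (f a) ∖ h (f b); rw [hf.2.2.1, hh.2.2.1]
  · show h (f SBA.zero) = SBA.zero; rw [hf.2.2.2, hh.2.2.2]

lemma hom_eq_on {X : Set S1} (hgen : Generates X) {f h : S1 → S2}
    (hf : IsHom f) (hh : IsHom h) (hagree : ∀ s ∈ X, f s = h s) : ∀ s, f s = h s := by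
  have hcl : ∀ a b : S1, a ∈ {s | f s = h s} → b ∈ {s | f s = h s} →
      a ⋏ b ∈ {s | f s = h s} ∧ a ⋎ b ∈ {s | f s = h s} ∧ a ∖ b ∈ {s | f s = h s} := by
    intro a b ha hb
    refine ⟨?_, ?_, ?_⟩
    · show f (a ⋏ b) = h (a ⋏ b); rw [hf.1, hh.1, ha, hb]
    · show f (a ⋎ b) = h (a ⋎ b); rw [hf.2.1, hh.2.1, ha, hb]
    · show f (a ∖ b) = h (a ∖ b); rw [hf.2.2.1, hh.2.2.1, ha, hb]
  have h0 : SBA.zero ∈ {s | f s = h s} := by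
    show f SBA.zero = h SBA.zero; rw [hf.2.2.2, hh.2.2.2]
  have := hgen {s | f s = h s} hagree h0 hcl
  intro s
  exact Set.eq_univ_iff_forall.mp this s

lemma hom_inv {f : S1 → S2} (hf : IsHom f) (hbij : Function.Bijective f) :
    IsHom (Equiv.ofBijective f hbij).symm := by
  have he : ∀ y, f ((Equiv.ofBijective f hbij).symm y) = y :=
    fun y => (Equiv.ofBijective f hbij).apply_symm_apply y
  refine ⟨fun a b => ?_, fun a b => ?_, fun a b => ?_, ?_⟩
  · apply hbij.injective; rw [he, hf.1, he, he]
  · apply hbij.injective; rw [he, hf.2.1, he, he]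
  · apply hbij.injective; rw [he, hf.2.2.1, he, he]
  · apply hbij.injective; rw [he, hf.2.2.2]

end Plumb

end SKP

theorem stmt13 (n : ℕ) (hn : 1 ≤ n) (S : Type u) [SBA S] [LeftHanded S]
    (x : Fin n → S) (hinj : Function.Injective x)
    (hgen : Generates (Set.range x)) :
    Finite S ∧
    Nat.card S ≤ ∏ m ∈ Finset.Icc 1 n, (m + 1) ^ n.choose m ∧
    (Nat.card S = ∏ m ∈ Finset.Icc 1 n, (m + 1) ^ n.choose m ↔
      LFreelyGenerates S (Set.range x)) := by
  classical
  have hfx : IsHom (SKP.fhom x : SKP.FF.{u} n → S) := SKP.fhom_isHom x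
  have hgenval : ∀ i, SKP.fhom x (SKP.genF n i) = x i := fun i => SKP.fhom_gen x i
  have hsurj : Function.Surjective (SKP.fhom x : SKP.FF.{u} n → S) := by
    have hT := hgen (Set.range (SKP.fhom x : SKP.FF.{u} n → S))
      (by rintro s ⟨i, rfl⟩; exact ⟨SKP.genF n i, hgenval i⟩)
      ⟨SBA.zero, hfx.2.2.2⟩
      (by
        rintro a b ⟨wa, rfl⟩ ⟨wb, rfl⟩
        exact ⟨⟨wa ⋏ wb, hfx.1 wa wb⟩, ⟨wa ⋎ wb, hfx.2.1 wa wb⟩,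
          ⟨wa ∖ wb, hfx.2.2.1 wa wb⟩⟩)
    intro s
    exact Set.eq_univ_iff_forall.mp hT s
  have hfin : Finite S := Finite.of_surjective _ hsurj
  have hcardF : Nat.card (SKP.FF.{u} n) = ∏ m ∈ Finset.Icc 1 n, (m + 1) ^ n.choose m :=
    SKP.card_FF
  have hle : Nat.card S ≤ ∏ m ∈ Finset.Icc 1 n, (m + 1) ^ n.choose m := by
    rw [← hcardF]
    exact Nat.card_le_card_of_surjective _ hsurj
  refine ⟨hfin, hle, ?_, ?_⟩
  · -- card equality implies freeness
    intro hcard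
    have hbij : Function.Bijective (SKP.fhom x : SKP.FF.{u} n → S) :=
      (Nat.bijective_iff_surjective_and_card _).mpr ⟨hsurj, by rw [hcardF, hcard]⟩
    refine ⟨hgen, ?_⟩
    intro T _instT _instLH gmap
    have hinv : IsHom (Equiv.ofBijective _ hbij).symm := SKP.hom_inv hfx hbij
    refine ⟨(SKP.fhom (fun i => gmap ⟨x i, Set.mem_range_self i⟩)) ∘
      (Equiv.ofBijective _ hbij).symm, SKP.hom_comp hinv (SKP.fhom_isHom _), ?_⟩
    rintro ⟨s, hs⟩
    obtain ⟨i, rfl⟩ := hs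
    have hsymm : (Equiv.ofBijective _ hbij).symm (x i) = SKP.genF n i := by
      rw [Equiv.symm_apply_eq]
      exact (hgenval i).symm
    show SKP.fhom _ ((Equiv.ofBijective _ hbij).symm (x i)) = gmap ⟨x i, _⟩
    rw [hsymm, SKP.fhom_gen]
  · -- freeness implies card equality
    rintro ⟨-, hfree⟩
    obtain ⟨h, hhom, hval⟩ := hfree (SKP.FF.{u} n)
      (fun s => SKP.genF n (Classical.choose s.2))
    have hxi : ∀ i, h (x i) = SKP.genF n i := by
      intro i
      have h1 := hval ⟨x i, Set.mem_range_self i⟩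
      have h2 : x (Classical.choose (Set.mem_range_self (f := x) i)) = x i :=
        Classical.choose_spec (Set.mem_range_self (f := x) i)
      rw [h1, hinj h2]
    have hco : ∀ w : SKP.FF.{u} n, h (SKP.fhom x w) = w := by
      have := SKP.hom_eq_on SKP.genF_generates (SKP.hom_comp hfx hhom) SKP.hom_id
        (by rintro w ⟨i, rfl⟩
            show h (SKP.fhom x (SKP.genF n i)) = SKP.genF n i
            rw [hgenval i, hxi i])
      intro w
      exact this w
    have hbij : Function.Bijective (SKP.fhom x : SKP.FF.{u} n → S) :=
      ⟨fun a b hab => by rw [← hco a, hab, hco], hsurj⟩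
    calc Nat.card S = Nat.card (SKP.FF.{u} n) := (Nat.card_eq_of_bijective _ hbij).symm
    _ = _ := hcardF
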